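/- Let C be an isomorphism-invariant set of interpretations of L on X and let τ be a maximal element of C with respect to ⊆, or a minimal element of C with respect to ⊆. Then τ is a reversible interpretation. -/
import Mathlib


/-- An interpretation on a set `X` of a relational language whose relation symbols are
indexed by `I`, the symbol `i` having arity `ar i`. -/
def Interp {I : Type*} (ar : I → ℕ) (X : Type*) : Type _ :=
  ∀ i : I, Set (Fin (ar i) → X)

namespace Interp

variable {I : Type*} {ar : I → ℕ} {X : Type*}

/-- `ρ ⊆ σ`: every relation of `ρ` is contained in the corresponding relation of `σ`. -/
def le (ρ σ : Interp ar X) : Prop := ∀ i, ρ i ⊆ σ i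

/-- The image `g[ρ]` of an interpretation under a bijection `g` of `X`:
`r(x)` holds in `g[ρ]` iff `r(g⁻¹ ∘ x)` holds in `ρ`. -/
def img (g : X ≃ X) (ρ : Interp ar X) : Interp ar X :=
  fun i => {x | (fun k => g.symm (x k)) ∈ ρ i}

/-- A set of interpretations is isomorphism-invariant iff it is closed under
images by bijections of `X`. -/
def IsoInvariant (C : Set (Interp ar X)) : Prop :=
  ∀ ρ ∈ C, ∀ g : X ≃ X, img g ρ ∈ C

/-- An interpretation is reversible iff every bijective homomorphism from it to itself
is an automorphism. -/
def Reversible (ρ : Interp ar X) : Prop :=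
  ∀ f : X ≃ X,
    (∀ i, ∀ x ∈ ρ i, (fun k => f (x k)) ∈ ρ i) →
    ∀ i, ∀ x : Fin (ar i) → X, x ∈ ρ i ↔ (fun k => f (x k)) ∈ ρ i

/-- `τ` is a maximal element of `C` with respect to `⊆`. -/
def MaxIn (C : Set (Interp ar X)) (τ : Interp ar X) : Prop :=
  τ ∈ C ∧ ¬∃ σ ∈ C, le τ σ ∧ τ ≠ σ

/-- `τ` is a minimal element of `C` with respect to `⊆`. -/
def MinIn (C : Set (Interp ar X)) (τ : Interp ar X) : Prop :=
  τ ∈ C ∧ ¬∃ σ ∈ C, le σ τ ∧ σ ≠ τ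

end Interp

/-- If `C` is an isomorphism-invariant set of interpretations of a relational language on a
nonempty set `X` and `τ` is a maximal or a minimal element of `C` with respect to `⊆`,
then `τ` is a reversible interpretation. -/
theorem stmt_0 {I : Type*} {ar : I → ℕ} {X : Type*} [Nonempty X]
    (C : Set (Interp ar X)) (hC : Interp.IsoInvariant C)
    (τ : Interp ar X) (hτ : Interp.MaxIn C τ ∨ Interp.MinIn C τ) :
    Interp.Reversible τ := by
  intro f hf
  rcases hτ with ⟨hτC, hmax⟩ | ⟨hτC, hmin⟩
  · -- maximal: τ ⊆ img f.symm τ, so equal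
    have hmem : Interp.img f.symm τ ∈ C := hC τ hτC f.symm
    have hle : Interp.le τ (Interp.img f.symm τ) := by
      intro i x hx
      show (fun k => f.symm.symm (x k)) ∈ τ i
      simpa using hf i x hx
    have heq : τ = Interp.img f.symm τ := by
      by_contra hne
      exact hmax ⟨_, hmem, hle, hne⟩
    intro i x
    constructor
    · exact fun hx => hf i x hx
    · intro hx
      rw [heq]
      show (fun k => f.symm.symm (x k)) ∈ τ i
      simpa using hx
  · -- minimal: img f τ ⊆ τ, so equal
    have hmem : Interp.img f τ ∈ C := hC τ hτC f
    have hle : Interp.le (Interp.img f τ) τ := by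
      intro i x hx
      have := hf i _ hx
      simpa using this
    have heq : Interp.img f τ = τ := by
      by_contra hne
      exact hmin ⟨_, hmem, hle, hne⟩
    intro i x
    constructor
    · exact fun hx => hf i x hx
    · intro hx
      have hx' : (fun k => f (x k)) ∈ Interp.img f τ i := by rw [heq]; exact hx
      have h2 : (fun k => f.symm (f (x k))) ∈ τ i := hx'
      simpa using h2
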